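/- Fix θ ∈ ℝ. For Lebesgue-almost every pair (H₁, H₂) ∈ ℂ^{3×3} × ℂ^{3×3}, the 6×6 block matrix [[H₁, H₂], [conj(H₁P₁′), conj(H₂P₂′)]] is invertible. -/

import Mathlib

open MeasureTheory

/-- The matrix `P₁′` used in the column-cancellation structure of the rate-`3/2` STBC. -/
noncomputable def P1' (θ : ℝ) : Matrix (Fin 3) (Fin 3) ℂ :=
  !![0, -1, 0;
     1, 0, 0;
     0, 0, -Complex.exp (2 * θ * Complex.I)]

/-- The matrix `P₂′` used in the column-cancellation structure of the rate-`3/2` STBC. -/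
noncomputable def P2' (θ : ℝ) : Matrix (Fin 3) (Fin 3) ℂ :=
  !![0, 0, -Complex.exp (θ * Complex.I);
     Complex.exp (2 * θ * Complex.I), 0, 0;
     0, -Complex.exp (θ * Complex.I), 0]

section Helpers

open MvPolynomial Set

private lemma measurable_mvEval {σ : Type*} (p : MvPolynomial σ ℂ) :
    Measurable fun x : σ → ℂ => MvPolynomial.eval x p := by
  induction p using MvPolynomial.induction_on with
  | C a => simp
  | add p q hp hq => simpa [Pi.add_def] using hp.add hq
  | mul_X p i hp => simpa [Pi.mul_def] using hp.mul (measurable_pi_apply i)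

private lemma measurable_coe_pi {σ : Type*} :
    Measurable fun (x : σ → ℝ) (i : σ) => (x i : ℂ) :=
  measurable_pi_iff.2 fun i => Complex.measurable_ofReal.comp (measurable_pi_apply i)

private lemma mv_null : ∀ (n : ℕ) (p : MvPolynomial (Fin n) ℂ), p ≠ 0 →
    volume {x : Fin n → ℝ | MvPolynomial.eval (fun i => (x i : ℂ)) p = 0} = 0 := by
  intro n
  induction n with
  | zero =>
    intro p hp
    obtain ⟨c, rfl⟩ := MvPolynomial.C_surjective (Fin 0) p
    have hc : c ≠ 0 := fun h => hp (by simp [h])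
    have : {x : Fin 0 → ℝ | MvPolynomial.eval (fun i => (x i : ℂ)) (C c) = 0} = ∅ := by
      ext x; simp [hc]
    rw [this]; simp
  | succ n ih =>
    intro p hp
    set q : Polynomial (MvPolynomial (Fin n) ℂ) := finSuccEquiv ℂ n p with hqdef
    have hq : q ≠ 0 := by
      intro h
      exact hp ((map_eq_zero_iff _ (finSuccEquiv ℂ n).injective).mp h)
    set B : Set ((Fin n → ℝ) × ℝ) :=
      {y | Polynomial.eval ((y.2 : ℂ)) (q.map (MvPolynomial.eval (fun i => (y.1 i : ℂ)))) = 0}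
      with hBdef
    have hFeq : ∀ y : (Fin n → ℝ) × ℝ,
        Polynomial.eval ((y.2 : ℂ)) (q.map (MvPolynomial.eval (fun i => (y.1 i : ℂ))))
          = ∑ k ∈ Finset.range (q.natDegree + 1),
              MvPolynomial.eval (fun i => (y.1 i : ℂ)) (q.coeff k) * (y.2 : ℂ) ^ k := by
      intro y
      rw [Polynomial.eval_eq_sum_range' (Nat.lt_succ_of_le Polynomial.natDegree_map_le)]
      exact Finset.sum_congr rfl fun k _ => by rw [Polynomial.coeff_map]
    have hB : MeasurableSet B := by
      have hm : Measurable fun y : (Fin n → ℝ) × ℝ =>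
          ∑ k ∈ Finset.range (q.natDegree + 1),
            MvPolynomial.eval (fun i => (y.1 i : ℂ)) (q.coeff k) * (y.2 : ℂ) ^ k := by
        refine Finset.measurable_sum _ fun k _ => Measurable.mul ?_ ?_
        · exact (measurable_mvEval _).comp (measurable_coe_pi.comp measurable_fst)
        · exact (Complex.measurable_ofReal.comp measurable_snd).pow_const k
      have : B = (fun y : (Fin n → ℝ) × ℝ =>
          ∑ k ∈ Finset.range (q.natDegree + 1),
            MvPolynomial.eval (fun i => (y.1 i : ℂ)) (q.coeff k) * (y.2 : ℂ) ^ k) ⁻¹' {0} := by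
        ext y; simp [hBdef, hFeq y]
      rw [this]
      exact hm (measurableSet_singleton 0)
    -- transfer to the product space
    have he := volume_preserving_piFinSuccAbove (fun _ : Fin (n+1) => ℝ) 0
    have hsw : MeasurePreserving (Prod.swap : ℝ × (Fin n → ℝ) → (Fin n → ℝ) × ℝ)
        (volume : Measure (ℝ × (Fin n → ℝ))) ((volume : Measure (Fin n → ℝ)).prod volume) := by
      rw [Measure.volume_eq_prod]
      exact Measure.measurePreserving_swap
    have hg := hsw.comp he
    have hset : {x : Fin (n+1) → ℝ | MvPolynomial.eval (fun i => (x i : ℂ)) p = 0}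
        = (Prod.swap ∘ (MeasurableEquiv.piFinSuccAbove (fun _ : Fin (n+1) => ℝ) 0)) ⁻¹' B := by
      ext x
      have hx : (fun i : Fin (n+1) => (x i : ℂ))
          = Fin.cons ((x 0 : ℝ) : ℂ) (fun i => ((x i.succ : ℝ) : ℂ)) := by
        funext i
        refine Fin.cases ?_ ?_ i <;> simp
      simp only [Set.mem_preimage, Set.mem_setOf_eq, Function.comp_apply, hBdef]
      rw [hx, eval_eq_eval_mv_eval', ← hqdef]
      constructor
      · intro h; convert h using 3 <;> rfl
      · intro h; convert h using 3 <;> rfl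
    rw [hset, hg.measure_preimage hB.nullMeasurableSet]
    -- slicing
    rw [Measure.measure_prod_null hB]
    have hN := ih q.leadingCoeff (Polynomial.leadingCoeff_ne_zero.mpr hq)
    rw [← compl_mem_ae_iff] at hN
    filter_upwards [hN] with x hx
    have hmap : q.map (MvPolynomial.eval (fun i => (x i : ℂ))) ≠ 0 := by
      intro h0
      apply hx
      have := congrArg (fun P => Polynomial.coeff P q.natDegree) h0
      simpa [Polynomial.coeff_map] using this
    have hslice : (Prod.mk x ⁻¹' B)
        = Complex.ofReal ⁻¹' {z : ℂ | (q.map (MvPolynomial.eval (fun i => (x i : ℂ)))).IsRoot z} := by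
      ext a; simp [hBdef, Polynomial.IsRoot]
    rw [hslice]
    exact Set.Finite.measure_zero
      ((Polynomial.finite_setOf_isRoot hmap).preimage Complex.ofReal_injective.injOn) _

private lemma mv_null' {σ : Type*} [Fintype σ] (p : MvPolynomial σ ℂ) (hp : p ≠ 0) :
    volume {x : σ → ℝ | MvPolynomial.eval (fun i => (x i : ℂ)) p = 0} = 0 := by
  classical
  let e := Fintype.equivFin σ
  have hΦ : MeasurePreserving (MeasurableEquiv.arrowCongr' e.symm (MeasurableEquiv.refl ℝ))
      (volume : Measure (Fin (Fintype.card σ) → ℝ)) (volume : Measure (σ → ℝ)) :=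
    volume_preserving_arrowCongr' _ _ (MeasurePreserving.id _)
  have hS : MeasurableSet {x : σ → ℝ | MvPolynomial.eval (fun i => (x i : ℂ)) p = 0} :=
    ((measurable_mvEval p).comp measurable_coe_pi) (measurableSet_singleton 0)
  rw [← hΦ.measure_preimage hS.nullMeasurableSet]
  have hren : (rename e p) ≠ 0 := fun h => hp (by
    have := (rename_injective (R := ℂ) e e.injective) (a₂ := 0) (by simpa using h)
    simpa using this)
  have hpre : (MeasurableEquiv.arrowCongr' e.symm (MeasurableEquiv.refl ℝ)) ⁻¹'
        {x : σ → ℝ | MvPolynomial.eval (fun i => (x i : ℂ)) p = 0}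
      = {x : Fin (Fintype.card σ) → ℝ |
          MvPolynomial.eval (fun i => (x i : ℂ)) (rename e p) = 0} := by
    ext x
    simp only [Set.mem_preimage, Set.mem_setOf_eq, MeasurableEquiv.arrowCongr',
      Equiv.arrowCongr', Equiv.arrowCongr, MeasurableEquiv.coe_mk, Equiv.coe_fn_mk,
      eval_rename]
    rfl
  rw [hpre]
  exact mv_null _ _ hren

private def ψ (q : (Fin 3 → Fin 3 → ℂ) × (Fin 3 → Fin 3 → ℂ)) :
    ((Fin 3 × Fin 3 × Bool) ⊕ (Fin 3 × Fin 3 × Bool)) → ℝ :=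
  Sum.elim (fun v => if v.2.2 then (q.1 v.1 v.2.1).re else (q.1 v.1 v.2.1).im)
           (fun v => if v.2.2 then (q.2 v.1 v.2.1).re else (q.2 v.1 v.2.1).im)

private lemma measurable_ψ : Measurable ψ := by
  apply measurable_pi_iff.2
  rintro (⟨i, j, b⟩ | ⟨i, j, b⟩) <;> cases b <;>
    · simp only [ψ, Sum.elim_inl, Sum.elim_inr, if_true, if_false, Bool.false_eq_true]
      fun_prop

private lemma volume_complex_rect {s t : Set ℝ} (hs : MeasurableSet s) (ht : MeasurableSet t) :
    volume {z : ℂ | z.re ∈ s ∧ z.im ∈ t} = volume s * volume t := by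
  have h1 : {z : ℂ | z.re ∈ s ∧ z.im ∈ t} = Complex.measurableEquivRealProd ⁻¹' (s ×ˢ t) := by
    ext z; simp [Complex.measurableEquivRealProd_apply, Set.mem_prod]
  rw [h1, Complex.volume_preserving_equiv_real_prod.measure_preimage
      (hs.prod ht).nullMeasurableSet, Measure.volume_eq_prod, Measure.prod_prod]

private lemma mp_ψ : MeasurePreserving ψ volume volume := by
  refine ⟨measurable_ψ, ?_⟩
  rw [show (volume : Measure (((Fin 3 × Fin 3 × Bool) ⊕ (Fin 3 × Fin 3 × Bool)) → ℝ))
      = Measure.pi fun _ => volume from rfl]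
  refine (Measure.pi_eq fun s hs => ?_).symm
  rw [Measure.map_apply measurable_ψ (MeasurableSet.univ_pi hs)]
  have hpre : ψ ⁻¹' (Set.univ.pi s) =
      (Set.univ.pi fun i => Set.univ.pi fun j =>
        {z : ℂ | z.re ∈ s (Sum.inl (i, j, true)) ∧ z.im ∈ s (Sum.inl (i, j, false))}) ×ˢ
      (Set.univ.pi fun i => Set.univ.pi fun j =>
        {z : ℂ | z.re ∈ s (Sum.inr (i, j, true)) ∧ z.im ∈ s (Sum.inr (i, j, false))}) := by
    ext q
    simp only [Set.mem_preimage, Set.mem_pi, Set.mem_univ, forall_true_left, Set.mem_prod,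
      Set.mem_setOf_eq, Sum.forall, Prod.forall, Bool.forall_bool, ψ, Sum.elim_inl, Sum.elim_inr]
    constructor
    · rintro ⟨h1, h2⟩
      exact ⟨fun i j => ⟨(h1 i j).2, by simpa using (h1 i j).1⟩,
             fun i j => ⟨(h2 i j).2, by simpa using (h2 i j).1⟩⟩
    · rintro ⟨h1, h2⟩
      exact ⟨fun i j => ⟨by simpa using (h1 i j).2, (h1 i j).1⟩,
             fun i j => ⟨by simpa using (h2 i j).2, (h2 i j).1⟩⟩
  rw [hpre, Measure.volume_eq_prod, Measure.prod_prod]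
  rw [volume_pi_pi, volume_pi_pi]
  simp_rw [volume_pi_pi]
  simp_rw [fun i j => volume_complex_rect (hs (Sum.inl (i, j, true))) (hs (Sum.inl (i, j, false))),
    fun i j => volume_complex_rect (hs (Sum.inr (i, j, true))) (hs (Sum.inr (i, j, false)))]
  rw [Fintype.prod_sum_type]
  congr 1 <;>
  · rw [Fintype.prod_prod_type]
    refine Finset.prod_congr rfl fun i _ => ?_
    rw [Fintype.prod_prod_type]
    refine Finset.prod_congr rfl fun j _ => ?_
    rw [Fintype.prod_bool]

private noncomputable def Msym (θ : ℝ) :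
    Matrix (Fin 3 ⊕ Fin 3) (Fin 3 ⊕ Fin 3)
      (MvPolynomial ((Fin 3 × Fin 3 × Bool) ⊕ (Fin 3 × Fin 3 × Bool)) ℂ) :=
  Matrix.fromBlocks
    (Matrix.of fun i j => X (.inl (i, j, true)) + X (.inl (i, j, false)) * C Complex.I)
    (Matrix.of fun i j => X (.inr (i, j, true)) + X (.inr (i, j, false)) * C Complex.I)
    ((Matrix.of fun i j => X (.inl (i, j, true)) - X (.inl (i, j, false)) * C Complex.I) *
      (P1' θ).map fun z => C ((starRingEnd ℂ) z))
    ((Matrix.of fun i j => X (.inr (i, j, true)) - X (.inr (i, j, false)) * C Complex.I) *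
      (P2' θ).map fun z => C ((starRingEnd ℂ) z))

private lemma bridge (θ : ℝ) (q : (Fin 3 → Fin 3 → ℂ) × (Fin 3 → Fin 3 → ℂ)) :
    (Matrix.fromBlocks (Matrix.of q.1) (Matrix.of q.2)
        ((Matrix.of q.1 * P1' θ).map (starRingEnd ℂ))
        ((Matrix.of q.2 * P2' θ).map (starRingEnd ℂ))).det
      = MvPolynomial.eval (fun v => ((ψ q v : ℝ) : ℂ)) (Msym θ).det := by
  set ev := MvPolynomial.eval
      (fun v : (Fin 3 × Fin 3 × Bool) ⊕ (Fin 3 × Fin 3 × Bool) => ((ψ q v : ℝ) : ℂ)) with hev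
  rw [RingHom.map_det, RingHom.mapMatrix_apply, Msym, Matrix.fromBlocks_map,
    Matrix.map_mul, Matrix.map_mul, Matrix.map_mul, Matrix.map_mul]
  have hconj : ∀ z : ℂ, (starRingEnd ℂ) z = (z.re : ℂ) - (z.im : ℂ) * Complex.I := by
    intro z; apply Complex.ext <;> simp
  have hA : (Matrix.of fun i j =>
      (X (.inl (i, j, true)) + X (.inl (i, j, false)) * C Complex.I :
        MvPolynomial ((Fin 3 × Fin 3 × Bool) ⊕ (Fin 3 × Fin 3 × Bool)) ℂ)).map ev
      = Matrix.of q.1 := by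
    ext i j; simp [hev, ψ, Complex.re_add_im]
  have hB : (Matrix.of fun i j =>
      (X (.inr (i, j, true)) + X (.inr (i, j, false)) * C Complex.I :
        MvPolynomial ((Fin 3 × Fin 3 × Bool) ⊕ (Fin 3 × Fin 3 × Bool)) ℂ)).map ev
      = Matrix.of q.2 := by
    ext i j; simp [hev, ψ, Complex.re_add_im]
  have hA' : (Matrix.of fun i j =>
      (X (.inl (i, j, true)) - X (.inl (i, j, false)) * C Complex.I :
        MvPolynomial ((Fin 3 × Fin 3 × Bool) ⊕ (Fin 3 × Fin 3 × Bool)) ℂ)).map ev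
      = (Matrix.of q.1).map (starRingEnd ℂ) := by
    ext i j; simp [hev, ψ, Matrix.map_apply, hconj (q.1 i j)]
  have hB' : (Matrix.of fun i j =>
      (X (.inr (i, j, true)) - X (.inr (i, j, false)) * C Complex.I :
        MvPolynomial ((Fin 3 × Fin 3 × Bool) ⊕ (Fin 3 × Fin 3 × Bool)) ℂ)).map ev
      = (Matrix.of q.2).map (starRingEnd ℂ) := by
    ext i j; simp [hev, ψ, Matrix.map_apply, hconj (q.2 i j)]
  have hP1 : (P1' θ).map (⇑ev ∘ fun z => C ((starRingEnd ℂ) z))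
      = (P1' θ).map (starRingEnd ℂ) := by
    ext i j; simp [Matrix.map_apply, hev]
  have hP2 : (P2' θ).map (⇑ev ∘ fun z => C ((starRingEnd ℂ) z))
      = (P2' θ).map (starRingEnd ℂ) := by
    ext i j; simp [Matrix.map_apply, hev]
  rw [hA, hB, hA', hB', Matrix.map_map, Matrix.map_map, hP1, hP2]

private lemma witness (θ : ℝ) :
    (Matrix.fromBlocks (Matrix.of (fun i j => (1 : Matrix (Fin 3) (Fin 3) ℂ) i j))
        (Matrix.of (fun i j => (!![1,-1,-1;1,-1,-1;1,1,1] : Matrix (Fin 3) (Fin 3) ℂ) i j))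
        ((Matrix.of (fun i j => (1 : Matrix (Fin 3) (Fin 3) ℂ) i j) * P1' θ).map (starRingEnd ℂ))
        ((Matrix.of (fun i j => (!![1,-1,-1;1,-1,-1;1,1,1] : Matrix (Fin 3) (Fin 3) ℂ) i j)
            * P2' θ).map (starRingEnd ℂ))).det ≠ 0 := by
  have e1 : Matrix.of (fun i j => (1 : Matrix (Fin 3) (Fin 3) ℂ) i j)
      = (1 : Matrix (Fin 3) (Fin 3) ℂ) := rfl
  have e2 : Matrix.of (fun i j => (!![1,-1,-1;1,-1,-1;1,1,1] : Matrix (Fin 3) (Fin 3) ℂ) i j)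
      = (!![1,-1,-1;1,-1,-1;1,1,1] : Matrix (Fin 3) (Fin 3) ℂ) := rfl
  rw [e1, e2, Matrix.one_mul, Matrix.det_fromBlocks_one₁₁]
  set u : ℂ := Complex.exp (-(θ * Complex.I)) with hu
  have hu0 : u ≠ 0 := Complex.exp_ne_zero _
  have hc1 : (starRingEnd ℂ) (Complex.exp (θ * Complex.I)) = u := by
    rw [← Complex.exp_conj]
    congr 1
    simp [Complex.conj_I]
  have hc2 : (starRingEnd ℂ) (Complex.exp (2 * θ * Complex.I)) = u ^ 2 := by
    rw [← Complex.exp_conj, pow_two, hu, ← Complex.exp_add]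
    congr 1
    simp only [map_mul, Complex.conj_I, Complex.conj_ofReal, map_ofNat]
    ring
  have m1 : (P1' θ).map (starRingEnd ℂ) = !![0,-1,0;1,0,0;0,0,-u^2] := by
    ext i j
    fin_cases i <;> fin_cases j <;>
      simp [P1', Matrix.map_apply, hc2, Matrix.vecHead, Matrix.vecTail]
  have m3 : ((!![1,-1,-1;1,-1,-1;1,1,1] : Matrix (Fin 3) (Fin 3) ℂ) * P2' θ).map (starRingEnd ℂ)
      = !![1,-1,-1;1,-1,-1;1,1,1] * !![0,0,-u;u^2,0,0;0,-u,0] := by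
    rw [Matrix.map_mul]
    congr 1
    · ext i j
      fin_cases i <;> fin_cases j <;>
        simp [Matrix.map_apply, Matrix.vecHead, Matrix.vecTail]
    · ext i j
      fin_cases i <;> fin_cases j <;>
        simp [P2', Matrix.map_apply, hc1, hc2, Matrix.vecHead, Matrix.vecTail]
  rw [m1, m3]
  have hdet : (!![1,-1,-1;1,-1,-1;1,1,1] * !![0,0,-u;u^2,0,0;0,-u,0]
      - !![0,-1,0;1,0,0;0,0,-u^2] * !![(1:ℂ),-1,-1;1,-1,-1;1,1,1]).det
      = 4 * u^2 * (3 * u - 1) := by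
    simp [Matrix.det_fin_three, Matrix.sub_apply, Matrix.mul_apply, Fin.sum_univ_three]
    ring
  rw [hdet]
  have habs : ‖u‖ = 1 := by
    rw [hu, Complex.norm_exp]
    simp
  intro h
  rcases mul_eq_zero.mp h with h1 | h2
  · rcases mul_eq_zero.mp h1 with h3 | h4
    · exact absurd h3 (by norm_num)
    · exact hu0 ((pow_eq_zero_iff two_ne_zero).mp h4)
  · have h3 : (3:ℂ) * u = 1 := by linear_combination h2
    have h4 := congrArg (‖·‖) h3
    rw [norm_mul, habs, norm_one, mul_one] at h4
    norm_num at h4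

end Helpers

/-- Fix `θ ∈ ℝ`. For Lebesgue-almost every pair `(H₁, H₂)` of `3 × 3`
complex matrices, the `6 × 6` block matrix `[[H₁, H₂], [conj(H₁P₁′), conj(H₂P₂′)]]`
is invertible. -/
theorem ae_isUnit_fromBlocks_conj (θ : ℝ) :
    ∀ᵐ q : (Fin 3 → Fin 3 → ℂ) × (Fin 3 → Fin 3 → ℂ) ∂volume,
      IsUnit (Matrix.fromBlocks (Matrix.of q.1) (Matrix.of q.2)
        ((Matrix.of q.1 * P1' θ).map (starRingEnd ℂ))
        ((Matrix.of q.2 * P2' θ).map (starRingEnd ℂ))) := by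
  have hS : MeasurableSet {x : (Fin 3 × Fin 3 × Bool) ⊕ (Fin 3 × Fin 3 × Bool) → ℝ |
      MvPolynomial.eval (fun v => (x v : ℂ)) (Msym θ).det = 0} :=
    ((measurable_mvEval _).comp measurable_coe_pi) (measurableSet_singleton 0)
  have hP : (Msym θ).det ≠ 0 := by
    intro h0
    have hb := bridge θ (fun i j => (1 : Matrix (Fin 3) (Fin 3) ℂ) i j,
      fun i j => (!![1,-1,-1;1,-1,-1;1,1,1] : Matrix (Fin 3) (Fin 3) ℂ) i j)
    dsimp only at hb
    apply witness θ
    rw [hb, h0, map_zero]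
  rw [MeasureTheory.ae_iff]
  have hset : {q : (Fin 3 → Fin 3 → ℂ) × (Fin 3 → Fin 3 → ℂ) |
        ¬ IsUnit (Matrix.fromBlocks (Matrix.of q.1) (Matrix.of q.2)
          ((Matrix.of q.1 * P1' θ).map (starRingEnd ℂ))
          ((Matrix.of q.2 * P2' θ).map (starRingEnd ℂ)))}
      = ψ ⁻¹' {x : (Fin 3 × Fin 3 × Bool) ⊕ (Fin 3 × Fin 3 × Bool) → ℝ |
          MvPolynomial.eval (fun v => (x v : ℂ)) (Msym θ).det = 0} := by
    ext q
    simp only [Set.mem_setOf_eq, Set.mem_preimage]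
    rw [← bridge θ q, Matrix.isUnit_iff_isUnit_det, isUnit_iff_ne_zero, not_ne_iff]
  rw [hset, mp_ψ.measure_preimage hS.nullMeasurableSet]
  exact mv_null' _ hP
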